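/- Let Z = X₁ × ⋯ × X_r be a product of proper geodesic CAT(−1) spaces and Γ < Isom(Z) a transverse subgroup. Let z = (x₁,…,x_r) ∈ Z. Then for every R > 0 there exists R' = R'(R,z) > 0 such that whenever g = (g₁,…,g_r) and h = (h₁,…,h_r) in Γ satisfy h₁x₁ ∈ O_R(x₁, g₁x₁), one has h_i x_i ∈ O_{R'}(x_i, g_i x_i) for all 1 ≤ i ≤ r. -/

import Mathlib

/-!
Core definitions: proper geodesic CAT(−1) spaces, geodesic segments,
nearest-point projections, horofunction (= Gromov) boundary.
-/

noncomputable section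

open Real Set Metric Filter Topology
open scoped ENNReal NNReal

/-- Inverse hyperbolic cosine. -/
def arcosh (x : ℝ) : ℝ := Real.log (x + Real.sqrt (x ^ 2 - 1))

/-- Cosine of the angle, at the common vertex, of the ℍ²-comparison triangle whose two
sides adjacent to this vertex have lengths `a`, `b` and whose opposite side has length `c`
(hyperbolic law of cosines). -/
def cmpCos (a b c : ℝ) : ℝ :=
  (Real.cosh a * Real.cosh b - Real.cosh c) / (Real.sinh a * Real.sinh b)

/-- The distance, in the ℍ²-comparison triangle with side lengths `a`, `b` adjacent to the
common vertex and opposite side length `c`, between the comparison points at arclength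
parameters `s` (on the side of length `a`) and `t` (on the side of length `b`). -/
def cmpDist (a b c s t : ℝ) : ℝ :=
  _root_.arcosh (Real.cosh s * Real.cosh t - Real.sinh s * Real.sinh t * cmpCos a b c)

/-- A choice of geodesics in a metric space: `geo x y` is an arclength parametrization on
`[0, dist x y]` of a geodesic from `x` to `y`.  A metric space admitting such a structure
is a geodesic space. -/
structure GeodesicStructure (X : Type*) [MetricSpace X] where
  geo : X → X → ℝ → X
  geo_zero : ∀ x y, geo x y 0 = x
  geo_end : ∀ x y, geo x y (dist x y) = y
  geo_isom : ∀ x y, ∀ s ∈ Set.Icc (0 : ℝ) (dist x y), ∀ t ∈ Set.Icc (0 : ℝ) (dist x y),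
    dist (geo x y s) (geo x y t) = |s - t|

/-- The geodesic segment `[x, y]`. -/
def GeodesicStructure.seg {X : Type*} [MetricSpace X] (G : GeodesicStructure X) (x y : X) :
    Set X :=
  G.geo x y '' Set.Icc 0 (dist x y)

/-- The CAT(−1) comparison property: every geodesic triangle is at least as thin as its
comparison triangle in the hyperbolic plane ℍ². -/
def GeodesicStructure.IsCATNegOne {X : Type*} [MetricSpace X] (G : GeodesicStructure X) :
    Prop :=
  ∀ x y z : X, ∀ s ∈ Set.Icc (0 : ℝ) (dist x y), ∀ t ∈ Set.Icc (0 : ℝ) (dist x z),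
    dist (G.geo x y s) (G.geo x z t) ≤ cmpDist (dist x y) (dist x z) (dist y z) s t

/-- `p` is a nearest point to `x` in the set `s` (a nearest-point projection of `x`). -/
def IsNearestPt {X : Type*} [MetricSpace X] (s : Set X) (x p : X) : Prop :=
  p ∈ s ∧ ∀ q ∈ s, dist x p ≤ dist x q

/-- A (possibly noncompact) geodesic subset of `X`: the isometric image of an interval. -/
def IsGeodesicSet {X : Type*} [MetricSpace X] (γ : Set X) : Prop :=
  ∃ (I : Set ℝ) (f : ℝ → X), I.OrdConnected ∧
    (∀ s ∈ I, ∀ t ∈ I, dist (f s) (f t) = |s - t|) ∧ γ = f '' I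

/-- A bi-infinite geodesic parametrized by arclength. -/
def IsGeodesicLine {X : Type*} [MetricSpace X] (γ : ℝ → X) : Prop :=
  ∀ s t : ℝ, dist (γ s) (γ t) = |s - t|

/-- The set of nearest-point projections to `γ` of points of `S`. -/
def projSet {X : Type*} [MetricSpace X] (γ : Set X) (S : Set X) : Set X :=
  {p | ∃ w ∈ S, IsNearestPt γ w p}

/-- The horofunction embedding `z ↦ d(·, z) − d(x₀, z)` based at `x₀`. -/
def horoemb {X : Type*} [MetricSpace X] (x0 : X) (z : X) : X → ℝ :=
  fun x => dist x z - dist x0 z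

/-- The horofunction boundary of `X` (based at `x₀`), which for a proper geodesic
CAT(−1) space coincides with the Gromov boundary `∂X`:  the set of limits, in the
topology of pointwise convergence, of functions `d(·, zₙ) − d(x₀, zₙ)` with `zₙ → ∞`. -/
def horoBdry {X : Type*} [MetricSpace X] (x0 : X) : Set (X → ℝ) :=
  closure (Set.range (horoemb x0)) \ Set.range (horoemb x0)

/-- `(w, [x,y])` is `K`-aligned: the nearest-point projection of `w` to `[x,y]` is at
distance less than `K` from `x`. -/
def AlignedLeft {X : Type*} [MetricSpace X] (G : GeodesicStructure X) (w x y : X)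
    (K : ℝ) : Prop :=
  ∃ p, IsNearestPt (G.seg x y) w p ∧ dist p x < K

/-- `([x,y], z)` is `K`-aligned, i.e. `(z, [y,x])` is `K`-aligned. -/
def AlignedRight {X : Type*} [MetricSpace X] (G : GeodesicStructure X) (x y z : X)
    (K : ℝ) : Prop :=
  ∃ q, IsNearestPt (G.seg x y) z q ∧ dist q y < K

/-- `(w, [x,y], z)` is `K`-aligned. -/
def AlignedTriple {X : Type*} [MetricSpace X] (G : GeodesicStructure X) (w x y z : X)
    (K : ℝ) : Prop :=
  AlignedLeft G w x y K ∧ AlignedRight G x y z K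


/-! ## Products of CAT(−1) spaces, boundary action, transverse subgroups -/

/-- The natural map on 1-Lipschitz functions induced by an isometry `g`:
`f ↦ f ∘ g⁻¹ − f(g⁻¹ x₀)`, i.e. the renormalized action on horofunctions. -/
def horoMap {Y : Type*} [MetricSpace Y] (x0 : Y) (g : Y ≃ᵢ Y) (f : Y → ℝ) : Y → ℝ :=
  fun x => f (g.symm x) - f (g.symm x0)

theorem horoMap_horoemb {Y : Type*} [MetricSpace Y] (x0 : Y) (g : Y ≃ᵢ Y) (z : Y) :
    horoMap x0 g (horoemb x0 z) = horoemb x0 (g z) := by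
  funext x
  simp only [horoMap, horoemb]
  have h1 : dist (g.symm x) z = dist x (g z) := by
    conv_rhs => rw [← g.apply_symm_apply x]
    rw [g.dist_eq]
  have h2 : dist (g.symm x0) z = dist x0 (g z) := by
    conv_rhs => rw [← g.apply_symm_apply x0]
    rw [g.dist_eq]
  rw [h1, h2]
  ring

theorem horoMap_continuous {Y : Type*} [MetricSpace Y] (x0 : Y) (g : Y ≃ᵢ Y) :
    Continuous (horoMap x0 g) := by
  apply continuous_pi
  intro x
  exact (continuous_apply (g.symm x)).sub (continuous_apply (g.symm x0))

/-- Isometries preserve the horofunction boundary. -/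
theorem horoMap_mem_bdry {Y : Type*} [MetricSpace Y] (x0 : Y) (g : Y ≃ᵢ Y)
    {f : Y → ℝ} (hf : f ∈ horoBdry x0) : horoMap x0 g f ∈ horoBdry x0 := by
  obtain ⟨hf1, hf2⟩ := hf
  constructor
  · have h2 : horoMap x0 g '' closure (Set.range (horoemb x0)) ⊆
        closure (horoMap x0 g '' Set.range (horoemb x0)) :=
      image_closure_subset_closure_image (horoMap_continuous x0 g)
    have h3 : horoMap x0 g '' Set.range (horoemb x0) ⊆ Set.range (horoemb x0) := by
      rintro _ ⟨_, ⟨w, rfl⟩, rfl⟩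
      exact ⟨g w, (horoMap_horoemb x0 g w).symm⟩
    exact closure_mono h3 (h2 ⟨f, hf1, rfl⟩)
  · intro hmem
    obtain ⟨w, hw⟩ := hmem
    apply hf2
    have hfx0 : f x0 = 0 := by
      have hcl : IsClosed {u : Y → ℝ | u x0 = 0} :=
        isClosed_eq (continuous_apply x0) continuous_const
      have hsub : Set.range (horoemb x0) ⊆ {u : Y → ℝ | u x0 = 0} := by
        rintro _ ⟨v, rfl⟩
        simp [horoemb]
      exact closure_minimal hsub hcl hf1
    refine ⟨g.symm w, ?_⟩
    have hkey : horoMap x0 g.symm (horoemb x0 w) = horoemb x0 (g.symm w) :=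
      horoMap_horoemb x0 g.symm w
    rw [← hkey, hw]
    funext x
    simp only [horoMap, IsometryEquiv.symm_symm]
    rw [g.symm_apply_apply, g.symm_apply_apply, hfx0]
    ring

section Product

variable {r : ℕ} {X : Fin r → Type*} [∀ i, MetricSpace (X i)]

/-- The componentwise action of `Isom(Z) = ∏ᵢ Isom(Xᵢ)` on `Z = ∏ᵢ Xᵢ`. -/
def apZ (g : ∀ i, X i ≃ᵢ X i) (z : ∀ i, X i) : ∀ i, X i := fun i => (g i) (z i)

variable (z0 : ∀ i, X i)

/-- The boundary `∂Z = ∏ᵢ ∂Xᵢ` of the product, using the horofunction model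
(based at `z0`) of the Gromov boundary of each CAT(−1) factor. -/
abbrev BdryZ := ∀ i, {f : X i → ℝ // f ∈ horoBdry (z0 i)}

/-- The action of `Isom(Z)` on `∂Z`, componentwise. -/
def bact (g : ∀ i, X i ≃ᵢ X i) (ξ : BdryZ z0) : BdryZ z0 :=
  fun i => ⟨horoMap (z0 i) (g i) ↑(ξ i), horoMap_mem_bdry (z0 i) (g i) (ξ i).2⟩

/-- The limit set `Λ(Γ) ⊂ ∂Z` of a subgroup `Γ ≤ Isom(Z)`: the set of accumulation
points of a `Γ`-orbit in `Z` under componentwise convergence to the boundary. -/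
def limitSet (Γ : Subgroup (∀ i, X i ≃ᵢ X i)) : Set (BdryZ z0) :=
  {ξ | ∃ u : ℕ → Γ, ∀ i,
    Filter.Tendsto (fun n => horoemb (z0 i) (((u n : ∀ i, X i ≃ᵢ X i)) i (z0 i)))
      Filter.atTop (nhds ↑(ξ i))}

/-- A discrete subgroup `Γ ≤ Isom(Z)` is **transverse** if it acts properly on `Z`,
every infinite sequence in `Γ` diverges in each factor (divergence), and any two
distinct points of the limit set differ in every component (antipodality). -/
def IsTransverse (Γ : Subgroup (∀ i, X i ≃ᵢ X i)) : Prop :=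
  (∀ (z : ∀ i, X i) (c : ℝ),
      {g : Γ | ∀ i, dist ((g : ∀ i, X i ≃ᵢ X i) i (z i)) (z i) ≤ c}.Finite) ∧
  (∀ u : ℕ → Γ, Function.Injective u → ∀ (z : ∀ i, X i) (i : Fin r),
      Filter.Tendsto (fun n => dist (((u n : ∀ i, X i ≃ᵢ X i)) i (z i)) (z i))
        Filter.atTop Filter.atTop) ∧
  (∀ ξ ζ, ξ ∈ limitSet z0 Γ → ζ ∈ limitSet z0 Γ → ξ ≠ ζ → ∀ i, ξ i ≠ ζ i)

/-- `Γ` is non-elementary: its limit set has at least three points. -/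
def IsNonElementary (Γ : Subgroup (∀ i, X i ≃ᵢ X i)) : Prop :=
  ∃ ξ ζ η, ξ ∈ limitSet z0 Γ ∧ ζ ∈ limitSet z0 Γ ∧ η ∈ limitSet z0 Γ ∧
    ξ ≠ ζ ∧ ξ ≠ η ∧ ζ ≠ η

/-- The conical (radial) limit set `Λ_c(Γ) ⊂ ∂Z`: points approached by an orbit within
uniformly bounded distance of geodesic rays in every factor simultaneously;
equivalently (via shadows), `β_ξ(z₀, gₙ z₀) ≥ d(z₀, gₙ z₀) − K` in every factor. -/
def conicalLimitSet (Γ : Subgroup (∀ i, X i ≃ᵢ X i)) : Set (BdryZ z0) :=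
  {ξ | ξ ∈ limitSet z0 Γ ∧ ∃ K : ℝ, ∃ u : ℕ → Γ, Function.Injective u ∧ ∀ n i,
    dist (z0 i) (((u n : ∀ i, X i ≃ᵢ X i)) i (z0 i)) - K ≤
      (↑(ξ i) : X i → ℝ) (z0 i) - (↑(ξ i) : X i → ℝ) (((u n : ∀ i, X i ≃ᵢ X i)) i (z0 i))}

/-- `g` is a loxodromic isometry with translation length `τ > 0`: it translates some
geodesic line (its axis) by `τ`. -/
def IsLoxodromicWith {Y : Type*} [MetricSpace Y] (g : Y ≃ᵢ Y) (τ : ℝ) : Prop :=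
  0 < τ ∧ ∃ γ : ℝ → Y, IsGeodesicLine γ ∧ ∀ t, g (γ t) = γ (t + τ)

/-- A parabolic isometry of a CAT(−1) space: no fixed point in `X` and a unique fixed
point on the boundary `∂X`. -/
def IsParabolicIso {Y : Type*} [MetricSpace Y] (x0 : Y) (g : Y ≃ᵢ Y) : Prop :=
  (∀ x : Y, g x ≠ x) ∧ ∃! f : Y → ℝ, f ∈ horoBdry x0 ∧ horoMap x0 g f = f

/-- `g ∈ Isom(Z)` is loxodromic with translation length vector `τ ∈ ℝʳ` if each
component is loxodromic with translation length `τᵢ`. -/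
def IsLoxVector (g : ∀ i, X i ≃ᵢ X i) (τ : Fin r → ℝ) : Prop :=
  ∀ i, IsLoxodromicWith (g i) (τ i)

/-- The vector-valued length spectrum `Spec(Γ) ⊂ ℝʳ`. -/
def lengthSpectrum (Γ : Subgroup (∀ i, X i ≃ᵢ X i)) : Set (Fin r → ℝ) :=
  {τ | ∃ g ∈ Γ, IsLoxVector g τ}

/-- `Spec(Γ)` is non-arithmetic: it generates a dense additive subgroup of `ℝʳ`. -/
def HasNonArithmeticSpectrum (Γ : Subgroup (∀ i, X i ≃ᵢ X i)) : Prop :=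
  Dense ((AddSubgroup.closure (lengthSpectrum Γ) : AddSubgroup (Fin r → ℝ)) :
    Set (Fin r → ℝ))

/-- The horospherical foliation `H = ∂Z × ℝʳ`. -/
abbrev HorFol := BdryZ z0 × (Fin r → ℝ)

/-- The `Isom(Z)`-action on `H = ∂Z × ℝʳ`:
`g · (ξ, u) = (g ξ, u + β_ξ(g⁻¹ z₀, z₀))`, where `β` is the vector-valued Busemann
cocycle `β_ξ(z, z')ᵢ = ξᵢ(zᵢ) − ξᵢ(z'ᵢ)`. -/
def HAct (g : ∀ i, X i ≃ᵢ X i) (p : HorFol z0) : HorFol z0 :=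
  (bact z0 g p.1,
    fun i => p.2 i +
      ((↑(p.1 i) : X i → ℝ) ((g i).symm (z0 i)) - (↑(p.1 i) : X i → ℝ) (z0 i)))

/-- Translation `T_a : (ξ, u) ↦ (ξ, u + a)` on `H`. -/
def Ttrans (a : Fin r → ℝ) (p : HorFol z0) : HorFol z0 := (p.1, p.2 + a)

instance horoBdryMeasurableSpace {Y : Type*} [MetricSpace Y] (x0 : Y) :
    MeasurableSpace {f : Y → ℝ // f ∈ horoBdry x0} := borel _

open MeasureTheory in
/-- `μ` is invariant under the `Γ`-action on `H`. -/
def InvariantUnder (Γ : Subgroup (∀ i, X i ≃ᵢ X i)) (μ : Measure (HorFol z0)) : Prop :=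
  ∀ g ∈ Γ, ∀ E : Set (HorFol z0), MeasurableSet E → μ (HAct z0 g ⁻¹' E) = μ E

open MeasureTheory in
/-- The `Γ`-action on `(H, μ)` is ergodic: every `Γ`-invariant Borel set is null or
conull. -/
def ErgodicUnder (Γ : Subgroup (∀ i, X i ≃ᵢ X i)) (μ : Measure (HorFol z0)) : Prop :=
  ∀ E : Set (HorFol z0), MeasurableSet E → (∀ g ∈ Γ, HAct z0 g ⁻¹' E = E) →
    μ E = 0 ∨ μ Eᶜ = 0

open MeasureTheory in
/-- `μ` is a Radon measure: a Borel measure finite on compact sets (on the second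
countable locally compact space `H` this is the usual notion). -/
def IsRadon {α : Type*} [TopologicalSpace α] [MeasurableSpace α] (μ : Measure α) : Prop :=
  ∀ Kc : Set α, IsCompact Kc → μ Kc ≠ ⊤

/-- The Poincaré series `P_{Γ,ψ}(s) = Σ_{g ∈ Γ} e^{−s ψ(κ(z₀, g z₀))}`, where
`κ(z,z') ∈ ℝʳ` is the vector of component distances. -/
def poincareSeries (Γ : Subgroup (∀ i, X i ≃ᵢ X i)) (ψ : (Fin r → ℝ) →ₗ[ℝ] ℝ)
    (s : ℝ) : ℝ≥0∞ :=
  ∑' g : Γ, ENNReal.ofReal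
    (Real.exp (-(s * ψ (fun i => dist (z0 i) (((g : ∀ i, X i ≃ᵢ X i)) i (z0 i))))))

/-- The critical exponent `δ_ψ(Γ)`. -/
def critExponent (Γ : Subgroup (∀ i, X i ≃ᵢ X i)) (ψ : (Fin r → ℝ) →ₗ[ℝ] ℝ) : ℝ :=
  sInf {s : ℝ | 0 < s ∧ poincareSeries z0 Γ ψ s ≠ ⊤}

/-- `Γ` is of `ψ`-divergence type: `δ_ψ(Γ) < ∞` and the Poincaré series diverges at
`δ_ψ(Γ)`. -/
def IsDivergenceType (Γ : Subgroup (∀ i, X i ≃ᵢ X i)) (ψ : (Fin r → ℝ) →ₗ[ℝ] ℝ) : Prop :=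
  {s : ℝ | 0 < s ∧ poincareSeries z0 Γ ψ s ≠ ⊤}.Nonempty ∧
  poincareSeries z0 Γ ψ (critExponent z0 Γ ψ) = ⊤

open MeasureTheory in
/-- A `δ`-dimensional `ψ`-conformal density of `Γ`: a `Γ`-equivariant family
`{ν_z}_{z ∈ Z}` of Borel measures on `Λ(Γ) ⊂ ∂Z` with
`dν_z/dν_w(ξ) = e^{−δ·ψ(β_ξ(z,w))}` and `ν_{z₀}(∂Z) = 1`. -/
structure ConformalDensity (Γ : Subgroup (∀ i, X i ≃ᵢ X i)) (δ : ℝ)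
    (ψ : (Fin r → ℝ) →ₗ[ℝ] ℝ) where
  nu : (∀ i, X i) → Measure (BdryZ z0)
  equivariant : ∀ g ∈ Γ, ∀ z, (nu z).map (bact z0 g) = nu (apZ g z)
  conformal : ∀ z w, nu z = (nu w).withDensity fun ξ =>
    ENNReal.ofReal (Real.exp (-(δ * ψ (fun i =>
      (↑(ξ i) : X i → ℝ) (z i) - (↑(ξ i) : X i → ℝ) (w i)))))
  normalized : nu z0 Set.univ = 1
  onLimitSet : nu z0 (limitSet z0 Γ)ᶜ = 0

open MeasureTheory in
/-- The measure `dμ(ξ, u) = e^{δ·ψ(u)} dν(ξ) du` on `H = ∂Z × ℝʳ`. -/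
def muH (ν : Measure (BdryZ z0)) (δ : ℝ) (ψ : (Fin r → ℝ) →ₗ[ℝ] ℝ) :
    Measure (HorFol z0) :=
  (ν.prod volume).withDensity fun p => ENNReal.ofReal (Real.exp (δ * ψ p.2))

end Product



/-! ### Auxiliary lemmas for Proposition 3.8 -/

lemma arcosh_le {y M : ℝ} (hM : 0 ≤ M) (h : y ≤ Real.cosh M) : _root_.arcosh y ≤ M := by
  unfold _root_.arcosh
  rcases le_or_gt y 0 with hy | hy
  · have habs : |y + Real.sqrt (y ^ 2 - 1)| ≤ 1 := by
      rcases lt_or_ge (y ^ 2 - 1) 0 with h2 | h2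
      · rw [Real.sqrt_eq_zero_of_nonpos h2.le, add_zero, abs_le]
        constructor <;> nlinarith
      · have hy1 : y ≤ -1 := by nlinarith [sq_nonneg (y+1)]
        have hs : Real.sqrt (y ^ 2 - 1) ≤ -y := by
          rw [show y^2 - 1 = (-y)^2 - 1 by ring]
          calc Real.sqrt ((-y)^2 - 1) ≤ Real.sqrt ((-y)^2) := by
                apply Real.sqrt_le_sqrt; linarith
            _ = -y := Real.sqrt_sq (by linarith)
        have hs2 : -y - 1 ≤ Real.sqrt (y ^ 2 - 1) := by
          rcases le_or_gt (-y-1) 0 with h3 | h3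
          · exact h3.trans (Real.sqrt_nonneg _)
          · exact (Real.le_sqrt' h3).2 (by nlinarith)
        rw [abs_le]; constructor <;> linarith
    calc Real.log (y + Real.sqrt (y ^ 2 - 1))
        = Real.log |y + Real.sqrt (y ^ 2 - 1)| := (Real.log_abs _).symm
      _ ≤ 0 := Real.log_nonpos (abs_nonneg _) habs
      _ ≤ M := hM
  · have hs : Real.sqrt (y ^ 2 - 1) ≤ Real.sinh M := by
      have h1 : y ^ 2 - 1 ≤ Real.sinh M ^ 2 := by
        have := Real.cosh_sq M; nlinarith [Real.cosh_pos M]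
      calc Real.sqrt (y ^ 2 - 1) ≤ Real.sqrt (Real.sinh M ^ 2) := Real.sqrt_le_sqrt h1
        _ = |Real.sinh M| := Real.sqrt_sq_eq_abs _
        _ = Real.sinh M := abs_of_nonneg (Real.sinh_nonneg_iff.2 hM)
    have hpos : 0 < y + Real.sqrt (y ^ 2 - 1) := by positivity
    rw [Real.log_le_iff_le_exp hpos]
    calc y + Real.sqrt (y^2-1) ≤ Real.cosh M + Real.sinh M := add_le_add h hs
      _ = Real.exp M := Real.cosh_add_sinh M

lemma sinh_sub_le {g a : ℝ} (hg : 0 ≤ g) (hga : g ≤ a) :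
    Real.sinh (a - g) ≤ Real.exp (-g) * Real.sinh a := by
  rw [Real.sinh_eq, Real.sinh_eq]
  have e1 : Real.exp (a - g) = Real.exp (-g) * Real.exp a := by
    rw [← Real.exp_add]; ring_nf
  have e2 : Real.exp (-(a - g)) = Real.exp g * Real.exp (-a) := by
    rw [← Real.exp_add]; ring_nf
  have e3 : Real.exp (-g) ≤ Real.exp g := Real.exp_le_exp.2 (by linarith)
  have e4 : (0:ℝ) < Real.exp (-a) := Real.exp_pos _
  rw [e1, e2]
  nlinarith [mul_le_mul_of_nonneg_right e3 e4.le]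

lemma one_add_sq_div_two_le_cosh (M : ℝ) : 1 + M ^ 2 / 2 ≤ Real.cosh M := by
  have h2 : Real.cosh (2 * (M/2)) = Real.cosh (M/2) ^ 2 + Real.sinh (M/2) ^ 2 :=
    Real.cosh_two_mul _
  rw [show (2:ℝ) * (M/2) = M by ring] at h2
  have h3 : (M/2) ^ 2 ≤ Real.sinh (M/2) ^ 2 := by
    rw [← sq_abs (M/2), ← sq_abs (Real.sinh (M/2))]
    have : |M/2| ≤ |Real.sinh (M/2)| := by
      rcases le_or_gt 0 M with h | h
      · rw [abs_of_nonneg (by linarith), abs_of_nonneg (Real.sinh_nonneg_iff.2 (by linarith))]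
        exact Real.self_le_sinh_iff.2 (by linarith)
      · rw [abs_of_neg (by linarith), abs_of_neg (Real.sinh_neg_iff.2 (by linarith)),
          ← Real.sinh_neg]
        exact Real.self_le_sinh_iff.2 (by linarith)
    exact pow_le_pow_left₀ (abs_nonneg _) this 2
  nlinarith [Real.cosh_sq (M/2)]

lemma sinh_le_half_exp {t : ℝ} (ht : 0 ≤ t) : Real.sinh t ≤ Real.exp t / 2 := by
  rw [Real.sinh_eq]
  have := Real.exp_pos (-t)
  linarith

lemma half_exp_le_cosh (M : ℝ) : Real.exp M / 2 ≤ Real.cosh M := by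
  rw [Real.cosh_eq]; have := Real.exp_pos (-M); linarith


lemma cosh_sub_cosh' (x y : ℝ) :
    Real.cosh x - Real.cosh y = 2 * Real.sinh ((x+y)/2) * Real.sinh ((x-y)/2) := by
  have h1 := Real.cosh_add ((x+y)/2) ((x-y)/2)
  have h2 := Real.cosh_sub ((x+y)/2) ((x-y)/2)
  rw [show (x+y)/2 + (x-y)/2 = x by ring] at h1
  rw [show (x+y)/2 - (x-y)/2 = y by ring] at h2
  nlinarith

/-- Comparison points at equal parameters on the two sides from a vertex with Gromov
product `G = (A+B-C)/2` are at distance at most `e^(t-G)`. -/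
lemma cmpDist_diag_le {A B C t : ℝ} (hA : 0 < A) (hB : 0 < B)
    (h1 : B - A ≤ C) (h2 : A - B ≤ C) (hG : 0 ≤ A + B - C) (ht : 0 ≤ t) :
    cmpDist A B C t t ≤ Real.exp (t - (A + B - C)/2) := by
  set G := (A + B - C)/2 with hGdef
  have hG0 : 0 ≤ G := by rw [hGdef]; linarith
  have hGA : G ≤ A := by rw [hGdef]; linarith
  have hGB : G ≤ B := by rw [hGdef]; linarith
  have hsA : 0 < Real.sinh A := Real.sinh_pos_iff.2 hA
  have hsB : 0 < Real.sinh B := Real.sinh_pos_iff.2 hB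
  apply arcosh_le (le_of_lt (Real.exp_pos _))
  have key : Real.cosh C - Real.cosh (A - B) = 2 * Real.sinh (A - G) * Real.sinh (B - G) := by
    rw [cosh_sub_cosh' C (A-B), hGdef]
    rw [show (C + (A-B))/2 = A - (A+B-C)/2 by ring, show (C - (A-B))/2 = B - (A+B-C)/2 by ring]
  have hcos : Real.cosh t * Real.cosh t - Real.sinh t * Real.sinh t * cmpCos A B C
      = 1 + Real.sinh t ^ 2 * ((Real.cosh C - Real.cosh (A-B)) / (Real.sinh A * Real.sinh B)) := by
    unfold cmpCos
    have hAB : Real.cosh (A - B) = Real.cosh A * Real.cosh B - Real.sinh A * Real.sinh B :=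
      Real.cosh_sub A B
    have hne : Real.sinh A * Real.sinh B ≠ 0 := by positivity
    field_simp
    linear_combination Real.sinh A * Real.sinh B * Real.cosh_sq t + Real.sinh t ^ 2 * hAB
  rw [hcos, key]
  have hb1 : Real.sinh (A - G) ≤ Real.exp (-G) * Real.sinh A := sinh_sub_le hG0 hGA
  have hb2 : Real.sinh (B - G) ≤ Real.exp (-G) * Real.sinh B := sinh_sub_le hG0 hGB
  have hnn1 : 0 ≤ Real.sinh (A - G) := Real.sinh_nonneg_iff.2 (by linarith)
  have hnn2 : 0 ≤ Real.sinh (B - G) := Real.sinh_nonneg_iff.2 (by linarith)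
  have hfrac : 2 * Real.sinh (A-G) * Real.sinh (B-G) / (Real.sinh A * Real.sinh B)
      ≤ 2 * Real.exp (-G) ^ 2 := by
    rw [div_le_iff₀ (by positivity)]
    calc 2 * Real.sinh (A-G) * Real.sinh (B-G)
        ≤ 2 * (Real.exp (-G) * Real.sinh A) * (Real.exp (-G) * Real.sinh B) := by
          apply mul_le_mul (by nlinarith) hb2 hnn2 (by positivity)
      _ = 2 * Real.exp (-G)^2 * (Real.sinh A * Real.sinh B) := by ring
  have hst : Real.sinh t ^ 2 ≤ (Real.exp t / 2) ^ 2 := by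
    have := sinh_le_half_exp ht
    have h0 : 0 ≤ Real.sinh t := Real.sinh_nonneg_iff.2 ht
    nlinarith
  calc 1 + Real.sinh t ^ 2 * (2 * Real.sinh (A-G) * Real.sinh (B-G) / (Real.sinh A * Real.sinh B))
      ≤ 1 + (Real.exp t / 2)^2 * (2 * Real.exp (-G) ^ 2) := by
        have hq : 0 ≤ Real.sinh t ^2 := sq_nonneg _
        have hfr0 : 0 ≤ 2 * Real.sinh (A-G) * Real.sinh (B-G) / (Real.sinh A * Real.sinh B) := by
          positivity
        nlinarith [sq_nonneg (Real.exp t / 2)]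
    _ = 1 + Real.exp (t - G) ^ 2 / 2 := by
        rw [Real.exp_sub, Real.exp_neg]
        field_simp
    _ ≤ Real.cosh (Real.exp (t - G)) := one_add_sq_div_two_le_cosh _

/-- Key CAT(-1) comparison estimate: the comparison point at parameter `t` on the side
of length `B` is almost aligned: its distance to the far endpoint of the other side
(of length `ρ ≤ t`) is at most `C - (B - t)` up to an exponentially small error. -/
lemma cmpDist_le_almost {ρ B C t : ℝ} (hρ : 0 ≤ ρ) (hρt : ρ ≤ t) (ht : 0 < t)
    (htB : t ≤ B) (hC : B - ρ ≤ C) (hC0 : 0 ≤ C) :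
    cmpDist ρ B C ρ t ≤ C - (B - t) + (2 * Real.cosh ρ + 1) * Real.exp (ρ - t) := by
  set ε := (2 * Real.cosh ρ + 1) * Real.exp (ρ - t) with hε
  have hε0 : 0 < ε := by positivity
  have hM0 : 0 ≤ C - (B - t) + ε := by linarith
  apply arcosh_le hM0
  set M := C - (B - t) + ε with hM
  rcases eq_or_lt_of_le hρ with hρ0 | hρ0
  · -- ρ = 0 : the expression is cosh t
    have hcos : Real.cosh ρ * Real.cosh t - Real.sinh ρ * Real.sinh t * cmpCos ρ B C
        = Real.cosh t := by
      rw [← hρ0]; simp [Real.cosh_zero, Real.sinh_zero]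
    rw [hcos]
    have : t ≤ M := by rw [hM]; linarith
    calc Real.cosh t ≤ Real.cosh M := by
          rw [Real.cosh_le_cosh, abs_of_nonneg ht.le, abs_of_nonneg hM0]; exact this
      _ ≤ Real.cosh M := le_refl _
  · have hB : 0 < B := lt_of_lt_of_le ht htB
    have hsB : 0 < Real.sinh B := Real.sinh_pos_iff.2 hB
    have hsρ : Real.sinh ρ ≠ 0 := ne_of_gt (Real.sinh_pos_iff.2 hρ0)
    have hcos : Real.cosh ρ * Real.cosh t - Real.sinh ρ * Real.sinh t * cmpCos ρ B C
        = (Real.cosh ρ * Real.sinh (B - t) + Real.cosh C * Real.sinh t) / Real.sinh B := by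
      unfold cmpCos
      rw [Real.sinh_sub]
      field_simp
      ring
    rw [hcos]
    have hb1 : Real.sinh (B - t) ≤ Real.exp (-t) * Real.sinh B := sinh_sub_le ht.le htB
    have hb2 : Real.sinh t ≤ Real.exp (-(B-t)) * Real.sinh B := by
      have := sinh_sub_le (g := B - t) (a := B) (by linarith) (by linarith)
      rw [show B - (B - t) = t by ring] at this
      exact this
    have step1 : (Real.cosh ρ * Real.sinh (B - t) + Real.cosh C * Real.sinh t) / Real.sinh B
        ≤ Real.cosh ρ * Real.exp (-t) + Real.cosh C * Real.exp (-(B-t)) := by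
      rw [div_le_iff₀ hsB]
      have c1 : 0 < Real.cosh ρ := Real.cosh_pos ρ
      have c2 : 0 < Real.cosh C := Real.cosh_pos C
      nlinarith [mul_le_mul_of_nonneg_left hb1 c1.le, mul_le_mul_of_nonneg_left hb2 c2.le]
    have step2 : Real.cosh ρ * Real.exp (-t) + Real.cosh C * Real.exp (-(B-t))
        ≤ Real.exp (C - B + t) / 2 + (Real.cosh ρ + 1/2) * Real.exp (ρ - t) := by
      have e1 : Real.cosh C * Real.exp (-(B-t))
          = Real.exp (C - B + t) / 2 + Real.exp (-C - B + t) / 2 := by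
        rw [Real.cosh_eq, show C - B + t = C + -(B-t) by ring,
          show -C - B + t = -C + -(B-t) by ring, Real.exp_add, Real.exp_add]; ring
      rw [e1]
      have e2 : Real.exp (-C - B + t) ≤ Real.exp (ρ - t) := by
        apply Real.exp_le_exp.2; linarith
      have e3 : Real.cosh ρ * Real.exp (-t) ≤ Real.cosh ρ * Real.exp (ρ - t) := by
        apply mul_le_mul_of_nonneg_left (Real.exp_le_exp.2 (by linarith)) (Real.cosh_pos ρ).le
      linarith
    have step3 : Real.exp (C - B + t) / 2 + (Real.cosh ρ + 1/2) * Real.exp (ρ - t)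
        ≤ Real.cosh M := by
      have hE1 : (1:ℝ) ≤ Real.exp (C - B + t) := by
        rw [← Real.exp_zero]; apply Real.exp_le_exp.2; linarith
      have key : Real.exp (C - B + t) / 2 + (Real.cosh ρ + 1/2) * Real.exp (ρ - t)
          ≤ Real.exp (C - B + t) * (1 + ε) / 2 := by
        rw [hε]
        nlinarith [Real.exp_pos (ρ - t), Real.cosh_pos ρ]
      have key2 : Real.exp (C - B + t) * (1 + ε) / 2 ≤ Real.exp M / 2 := by
        have h1 := Real.add_one_le_exp ε
        have h2 := Real.exp_pos (C - B + t)
        calc Real.exp (C - B + t) * (1 + ε) / 2 ≤ Real.exp (C - B + t) * Real.exp ε / 2 := by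
              nlinarith
          _ = Real.exp M / 2 := by
              rw [← Real.exp_add, hM]; ring_nf
      calc _ ≤ Real.exp (C - B + t) * (1 + ε) / 2 := key
        _ ≤ Real.exp M / 2 := key2
        _ ≤ Real.cosh M := half_exp_le_cosh M
    linarith


section Geo
variable {Y : Type*} [MetricSpace Y] (G : GeodesicStructure Y)

lemma GeodesicStructure.dist_geo_left (x y : Y) {t : ℝ} (h : t ∈ Set.Icc (0:ℝ) (dist x y)) :
    dist x (G.geo x y t) = t := by
  have h0 : (0:ℝ) ∈ Set.Icc (0:ℝ) (dist x y) := ⟨le_refl 0, dist_nonneg⟩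
  have := G.geo_isom x y 0 h0 t h
  rw [G.geo_zero] at this
  rw [this, abs_of_nonpos (by linarith [h.1])]
  ring

lemma GeodesicStructure.dist_geo_right (x y : Y) {t : ℝ} (h : t ∈ Set.Icc (0:ℝ) (dist x y)) :
    dist (G.geo x y t) y = dist x y - t := by
  have hd : dist x y ∈ Set.Icc (0:ℝ) (dist x y) := ⟨dist_nonneg, le_refl _⟩
  have := G.geo_isom x y t h (dist x y) hd
  rw [G.geo_end] at this
  rw [this, abs_of_nonpos (by linarith [h.2])]
  ring

lemma GeodesicStructure.geo_mem_seg (x y : Y) {t : ℝ} (h : t ∈ Set.Icc (0:ℝ) (dist x y)) :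
    G.geo x y t ∈ G.seg x y := ⟨t, h, rfl⟩

lemma GeodesicStructure.left_mem_seg (x y : Y) : x ∈ G.seg x y := by
  have := G.geo_mem_seg x y (t := 0) ⟨le_refl 0, dist_nonneg⟩
  rwa [G.geo_zero] at this

lemma GeodesicStructure.right_mem_seg (x y : Y) : y ∈ G.seg x y := by
  have := G.geo_mem_seg x y (t := dist x y) ⟨dist_nonneg, le_refl _⟩
  rwa [G.geo_end] at this

lemma GeodesicStructure.seg_nonempty (x y : Y) : (G.seg x y).Nonempty :=
  ⟨x, G.left_mem_seg x y⟩

/-- Nearest point projection estimate in CAT(-1): the distance from a point to a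
geodesic segment is bounded by the Gromov product plus 1. -/
lemma infDist_seg_le (hCAT : G.IsCATNegOne) (p a b : Y) :
    Metric.infDist p (G.seg a b) ≤ (dist p a + dist p b - dist a b) / 2 + 1 := by
  have tri1 : dist a b ≤ dist a p + dist p b := dist_triangle a p b
  have tri2 : dist a p ≤ dist a b + dist b p := dist_triangle a b p
  have tri3 : dist p b ≤ dist p a + dist a b := dist_triangle p a b
  have hca : dist p a = dist a p := dist_comm p a
  have hcb : dist b p = dist p b := dist_comm b p
  rcases eq_or_lt_of_le (dist_nonneg (x := a) (y := p)) with hap | hap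
  · calc Metric.infDist p (G.seg a b) ≤ dist p a := Metric.infDist_le_dist_of_mem (G.left_mem_seg a b)
      _ ≤ _ := by rw [hca, ← hap]; linarith
  rcases eq_or_lt_of_le (dist_nonneg (x := a) (y := b)) with hab | hab
  · calc Metric.infDist p (G.seg a b) ≤ dist p a := Metric.infDist_le_dist_of_mem (G.left_mem_seg a b)
      _ ≤ _ := by rw [← hab]; linarith
  set s := (dist a p + dist a b - dist p b) / 2 with hs
  have hs0 : 0 ≤ s := by rw [hs]; linarith
  have hsd : s ≤ dist a b := by rw [hs]; linarith
  have hsap : s ≤ dist a p := by rw [hs]; linarith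
  have hw : G.geo a b s ∈ G.seg a b := G.geo_mem_seg a b ⟨hs0, hsd⟩
  have hterm1 : dist p (G.geo a p s) = dist a p - s := by
    rw [dist_comm]; exact G.dist_geo_right a p ⟨hs0, hsap⟩
  have hterm2 : dist (G.geo a p s) (G.geo a b s) ≤ 1 := by
    have h1 := hCAT a p b s ⟨hs0, hsap⟩ s ⟨hs0, hsd⟩
    have h2 : cmpDist (dist a p) (dist a b) (dist p b) s s
        ≤ Real.exp (s - (dist a p + dist a b - dist p b)/2) :=
      cmpDist_diag_le hap hab (by linarith) (by linarith) (by linarith) hs0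
    rw [show s - (dist a p + dist a b - dist p b)/2 = 0 by rw [hs]; ring, Real.exp_zero] at h2
    exact h1.trans h2
  calc Metric.infDist p (G.seg a b) ≤ dist p (G.geo a b s) := Metric.infDist_le_dist_of_mem hw
    _ ≤ dist p (G.geo a p s) + dist (G.geo a p s) (G.geo a b s) := dist_triangle _ _ _
    _ ≤ (dist a p - s) + 1 := by rw [hterm1]; linarith
    _ = (dist p a + dist p b - dist a b) / 2 + 1 := by rw [hs, hca]; ring

/-- The Gromov product is a lower bound for the distance to the geodesic segment. -/
lemma gp_le_infDist (p a b : Y) :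
    (dist p a + dist p b - dist a b) / 2 ≤ Metric.infDist p (G.seg a b) := by
  by_contra hlt
  push_neg at hlt
  obtain ⟨w, hw, hdw⟩ := (Metric.infDist_lt_iff (G.seg_nonempty a b)).1 hlt
  obtain ⟨s, hs, rfl⟩ := hw
  have h1 : dist a (G.geo a b s) = s := G.dist_geo_left a b hs
  have h2 : dist (G.geo a b s) b = dist a b - s := G.dist_geo_right a b hs
  have h3 := dist_triangle p (G.geo a b s) a
  have h4 := dist_triangle p (G.geo a b s) b
  have h5 : dist (G.geo a b s) a = s := by rw [dist_comm]; exact h1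
  linarith

/-- Two-sided horofunction-style approximation along a geodesic. -/
lemma dist_geo_almost (hCAT : G.IsCATNegOne) (x0 b x : Y) {t : ℝ}
    (h1 : dist x0 x ≤ t) (h2 : 0 < t) (h3 : t ≤ dist x0 b) :
    |(dist x b - dist x0 b) - (dist x (G.geo x0 b t) - t)|
      ≤ (2 * Real.cosh (dist x0 x) + 1) * Real.exp (dist x0 x - t) := by
  set p := G.geo x0 b t with hp
  have hmem : t ∈ Set.Icc (0:ℝ) (dist x0 b) := ⟨h2.le, h3⟩
  have hpb : dist p b = dist x0 b - t := G.dist_geo_right x0 b hmem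
  have upper : dist x b - dist x0 b ≤ dist x p - t := by
    have := dist_triangle x p b
    rw [hpb] at this; linarith
  have lower : dist x p ≤ dist x b - (dist x0 b - t)
      + (2 * Real.cosh (dist x0 x) + 1) * Real.exp (dist x0 x - t) := by
    have hx : dist x p = dist (G.geo x0 x (dist x0 x)) (G.geo x0 b t) := by
      rw [G.geo_end]
    have hcat := hCAT x0 x b (dist x0 x) ⟨dist_nonneg, le_refl _⟩ t hmem
    have hcmp : cmpDist (dist x0 x) (dist x0 b) (dist x b) (dist x0 x) t
        ≤ dist x b - (dist x0 b - t) + (2 * Real.cosh (dist x0 x) + 1) * Real.exp (dist x0 x - t) :=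
      cmpDist_le_almost dist_nonneg h1 h2 h3 (by linarith [dist_triangle x0 x b, dist_comm x0 x]) dist_nonneg
    rw [hx]; exact hcat.trans hcmp
  rw [abs_le]; constructor <;> [linarith; linarith]
end Geo


section Limits
variable {Y : Type*} [MetricSpace Y] (G : GeodesicStructure Y) (x0 : Y)

/-- If two sequences escape to infinity with Gromov products tending to infinity,
their horofunction limits coincide (CAT(-1)). -/
lemma merge_limits (hCAT : G.IsCATNegOne) (a b : ℕ → Y) (f g : Y → ℝ)
    (hf : ∀ x, Tendsto (fun n => dist x (a n) - dist x0 (a n)) atTop (𝓝 (f x)))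
    (hg : ∀ x, Tendsto (fun n => dist x (b n) - dist x0 (b n)) atTop (𝓝 (g x)))
    (hGr : Tendsto (fun n => (dist x0 (a n) + dist x0 (b n) - dist (a n) (b n)) / 2)
        atTop atTop) : f = g := by
  funext x
  by_contra hne
  set ε := |f x - g x| with hε
  have hε0 : 0 < ε := abs_pos.2 (sub_ne_zero.2 hne)
  set ρ := dist x0 x with hρ
  have hρ0 : 0 ≤ ρ := dist_nonneg
  set K := 8 * (2 * Real.cosh ρ + 1) / ε with hK
  have hK0 : 0 < K := by positivity
  set t := ρ + 1 + |Real.log K| with hT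
  have ht1 : ρ ≤ t := by
    rw [hT]; linarith [abs_nonneg (Real.log K)]
  have ht2 : 0 < t := lt_of_le_of_lt hρ0 (by rw [hT]; linarith [abs_nonneg (Real.log K)])
  have herr : (2 * Real.cosh ρ + 1) * Real.exp (ρ - t) ≤ ε / 8 := by
    have h1 : Real.exp (ρ - t) ≤ Real.exp (-Real.log K) := by
      apply Real.exp_le_exp.2
      rw [hT]
      have := le_abs_self (Real.log K)
      linarith
    have h2 : Real.exp (-Real.log K) = K⁻¹ := by rw [Real.exp_neg, Real.exp_log hK0]
    rw [h2] at h1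
    have h3 : (2 * Real.cosh ρ + 1) * K⁻¹ = ε / 8 := by
      rw [hK]; field_simp
    calc (2 * Real.cosh ρ + 1) * Real.exp (ρ - t)
        ≤ (2 * Real.cosh ρ + 1) * K⁻¹ := by
          apply mul_le_mul_of_nonneg_left h1 (by positivity)
      _ = ε / 8 := h3
  have hev1 : ∀ᶠ n in atTop,
      t + |Real.log (8/ε)| ≤ (dist x0 (a n) + dist x0 (b n) - dist (a n) (b n)) / 2 :=
    hGr.eventually_ge_atTop _
  have hev2 : ∀ᶠ n in atTop, |(dist x (a n) - dist x0 (a n)) - f x| < ε / 16 := by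
    filter_upwards [Metric.tendsto_nhds.1 (hf x) (ε/16) (by positivity)] with n hn
    rw [Real.dist_eq] at hn; exact hn
  have hev3 : ∀ᶠ n in atTop, |(dist x (b n) - dist x0 (b n)) - g x| < ε / 16 := by
    filter_upwards [Metric.tendsto_nhds.1 (hg x) (ε/16) (by positivity)] with n hn
    rw [Real.dist_eq] at hn; exact hn
  obtain ⟨n, hn1, hn23⟩ := (hev1.and (hev2.and hev3)).exists
  obtain ⟨hn2, hn3⟩ := hn23
  set Gn := (dist x0 (a n) + dist x0 (b n) - dist (a n) (b n)) / 2 with hGn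
  have hGt : t ≤ Gn := le_trans (by linarith [abs_nonneg (Real.log (8/ε))]) hn1
  have hGA : Gn ≤ dist x0 (a n) := by
    have h := dist_triangle x0 (a n) (b n)
    rw [hGn]; linarith
  have hGB : Gn ≤ dist x0 (b n) := by
    have h := dist_triangle x0 (b n) (a n)
    have hcomm : dist (b n) (a n) = dist (a n) (b n) := dist_comm _ _
    rw [hGn]; linarith
  have hexp : Real.exp (t - Gn) ≤ ε / 8 := by
    have h1 : t - Gn ≤ -Real.log (8/ε) := by
      have := le_abs_self (Real.log (8/ε)); linarith
    calc Real.exp (t - Gn) ≤ Real.exp (-Real.log (8/ε)) := Real.exp_le_exp.2 h1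
      _ = (8/ε)⁻¹ := by rw [Real.exp_neg, Real.exp_log (by positivity)]
      _ = ε / 8 := by field_simp
  set pa := G.geo x0 (a n) t with hpa
  set pb := G.geo x0 (b n) t with hpb
  have hda : |(dist x (a n) - dist x0 (a n)) - (dist x pa - t)|
      ≤ (2 * Real.cosh ρ + 1) * Real.exp (ρ - t) :=
    dist_geo_almost G hCAT x0 (a n) x ht1 ht2 (le_trans hGt hGA)
  have hdb : |(dist x (b n) - dist x0 (b n)) - (dist x pb - t)|
      ≤ (2 * Real.cosh ρ + 1) * Real.exp (ρ - t) :=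
    dist_geo_almost G hCAT x0 (b n) x ht1 ht2 (le_trans hGt hGB)
  have hpq : dist pa pb ≤ ε / 8 := by
    have h1 := hCAT x0 (a n) (b n) t ⟨ht2.le, le_trans hGt hGA⟩ t ⟨ht2.le, le_trans hGt hGB⟩
    have h2 : cmpDist (dist x0 (a n)) (dist x0 (b n)) (dist (a n) (b n)) t t
        ≤ Real.exp (t - Gn) := by
      have hg1 := dist_triangle x0 (a n) (b n)
      have hg2 := dist_triangle x0 (b n) (a n)
      have hcomm : dist (b n) (a n) = dist (a n) (b n) := dist_comm _ _
      have := cmpDist_diag_le (A := dist x0 (a n)) (B := dist x0 (b n))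
        (C := dist (a n) (b n)) (t := t)
        (lt_of_lt_of_le ht2 (le_trans hGt hGA))
        (lt_of_lt_of_le ht2 (le_trans hGt hGB))
        (by linarith) (by linarith) (by rw [hGn] at hGt; linarith) ht2.le
      rw [hGn]
      exact this
    exact h1.trans (h2.trans hexp)
  have habs : |dist x pa - dist x pb| ≤ dist pa pb := by
    rw [dist_comm x pa, dist_comm x pb]; exact abs_dist_sub_le pa pb x
  have hfinal : ε < ε := by
    have e1 : |f x - (dist x (a n) - dist x0 (a n))| < ε/16 := by
      rw [abs_sub_comm]; exact hn2
    have e5 : |(dist x pa - t) - (dist x pb - t)| ≤ ε/8 := by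
      have h8 : (dist x pa - t) - (dist x pb - t) = dist x pa - dist x pb := by ring
      rw [h8]; exact habs.trans hpq
    have e6 : |(dist x pb - t) - (dist x (b n) - dist x0 (b n))| ≤ ε/8 := by
      rw [abs_sub_comm]; exact hdb.trans herr
    have e2 : |(dist x (a n) - dist x0 (a n)) - (dist x pa - t)| ≤ ε/8 := hda.trans herr
    calc ε = |f x - g x| := hε
      _ ≤ |f x - (dist x (a n) - dist x0 (a n))|
          + |(dist x (a n) - dist x0 (a n)) - (dist x pa - t)|
          + |(dist x pa - t) - (dist x pb - t)|
          + |(dist x pb - t) - (dist x (b n) - dist x0 (b n))|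
          + |(dist x (b n) - dist x0 (b n)) - g x| := by
            have h4 := abs_sub_le (f x) (dist x (a n) - dist x0 (a n)) (g x)
            have h5 := abs_sub_le (dist x (a n) - dist x0 (a n)) (dist x pa - t) (g x)
            have h6 := abs_sub_le (dist x pa - t) (dist x pb - t) (g x)
            have h7 := abs_sub_le (dist x pb - t) (dist x (b n) - dist x0 (b n)) (g x)
            linarith
      _ < ε := by linarith
  exact lt_irrefl _ hfinal

end Limits

section Proper
variable {Y : Type*} [MetricSpace Y] [ProperSpace Y] (x0 : Y)

/-- Along an escaping sequence, the pointwise limit attains the value `-t` somewhere,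
for every `0 ≤ t`. -/
lemma limit_attains (G : GeodesicStructure Y) (c : ℕ → Y) (f : Y → ℝ)
    (hconv : ∀ x, Tendsto (fun n => dist x (c n) - dist x0 (c n)) atTop (𝓝 (f x)))
    (hesc : Tendsto (fun n => dist x0 (c n)) atTop atTop) (t : ℝ) (ht : 0 ≤ t) :
    ∃ y, f y = -t := by
  set p : ℕ → Y := fun n => G.geo x0 (c n) (min t (dist x0 (c n))) with hp
  have hmem : ∀ n, min t (dist x0 (c n)) ∈ Set.Icc (0:ℝ) (dist x0 (c n)) :=
    fun n => ⟨le_min ht dist_nonneg, min_le_right _ _⟩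
  have hball : ∀ n, p n ∈ Metric.closedBall x0 t := by
    intro n
    rw [Metric.mem_closedBall, dist_comm]
    rw [hp]
    have := G.dist_geo_left x0 (c n) (hmem n)
    rw [this]
    exact min_le_left _ _
  obtain ⟨y, -, φ, hφ, hyconv⟩ :=
    (isCompact_closedBall x0 t).tendsto_subseq hball
  have hev : ∀ᶠ k in atTop, t ≤ dist x0 (c (φ k)) :=
    (hesc.comp hφ.tendsto_atTop).eventually_ge_atTop t
  -- value of the horofunction of c n at p n is exactly -t eventually
  have hval : ∀ᶠ k in atTop,
      dist (p (φ k)) (c (φ k)) - dist x0 (c (φ k)) = -t := by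
    filter_upwards [hev] with k hk
    have hmin : min t (dist x0 (c (φ k))) = t := min_eq_left hk
    have := G.dist_geo_right x0 (c (φ k)) (hmem (φ k))
    rw [hp]; simp only []
    rw [this, hmin]; ring
  -- compare with the value at y
  have hclose : Tendsto (fun k => dist y (c (φ k)) - dist (p (φ k)) (c (φ k)))
      atTop (𝓝 0) := by
    apply squeeze_zero_norm (fun k => abs_dist_sub_le y (p (φ k)) (c (φ k))) ?_
    have : Tendsto (fun k => dist y (p (φ k))) atTop (𝓝 (dist y y)) :=
      tendsto_const_nhds.dist hyconv
    simpa using this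
  have h1 : Tendsto (fun k => dist y (c (φ k)) - dist x0 (c (φ k))) atTop (𝓝 (f y)) :=
    (hconv y).comp hφ.tendsto_atTop
  have h2 : Tendsto (fun k => dist (p (φ k)) (c (φ k)) - dist x0 (c (φ k))) atTop (𝓝 (f y)) := by
    have := h1.sub hclose
    simp only [sub_zero] at this
    convert this using 2 with k
    ring
  have h3 : Tendsto (fun k => dist (p (φ k)) (c (φ k)) - dist x0 (c (φ k))) atTop (𝓝 (-t)) :=
    Tendsto.congr' (by filter_upwards [hval] with k hk; exact hk.symm) tendsto_const_nhds
  exact ⟨y, tendsto_nhds_unique h2 h3⟩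

/-- The pointwise limit of horofunctions along an escaping sequence is not of the form
`horoemb x0 w`. -/
lemma limit_notin_range (G : GeodesicStructure Y) (c : ℕ → Y) (f : Y → ℝ)
    (hconv : ∀ x, Tendsto (fun n => dist x (c n) - dist x0 (c n)) atTop (𝓝 (f x)))
    (hesc : Tendsto (fun n => dist x0 (c n)) atTop atTop) :
    f ∉ Set.range (horoemb x0) := by
  rintro ⟨w, hw⟩
  have hescw : Tendsto (fun n => dist w (c n)) atTop atTop := by
    apply tendsto_atTop_mono' atTop _ (tendsto_atTop_add_const_right atTop (-(dist x0 w)) hesc)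
    filter_upwards with n
    have := dist_triangle x0 w (c n)
    linarith
  set p : ℕ → Y := fun n => G.geo w (c n) (min 1 (dist w (c n))) with hp
  have hmem : ∀ n, min 1 (dist w (c n)) ∈ Set.Icc (0:ℝ) (dist w (c n)) :=
    fun n => ⟨le_min zero_le_one dist_nonneg, min_le_right _ _⟩
  have hball : ∀ n, p n ∈ Metric.closedBall w 1 := by
    intro n
    rw [Metric.mem_closedBall, dist_comm, hp]
    simp only []
    rw [G.dist_geo_left w (c n) (hmem n)]
    exact min_le_left _ _
  obtain ⟨y, -, φ, hφ, hyconv⟩ := (isCompact_closedBall w 1).tendsto_subseq hball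
  have hev : ∀ᶠ k in atTop, (1:ℝ) ≤ dist w (c (φ k)) :=
    (hescw.comp hφ.tendsto_atTop).eventually_ge_atTop 1
  have hval : ∀ᶠ k in atTop,
      dist (p (φ k)) (c (φ k)) - dist x0 (c (φ k))
        = (dist w (c (φ k)) - dist x0 (c (φ k))) - 1 := by
    filter_upwards [hev] with k hk
    have hmin : min 1 (dist w (c (φ k))) = 1 := min_eq_left hk
    have := G.dist_geo_right w (c (φ k)) (hmem (φ k))
    rw [hp]; simp only []
    rw [this, hmin]; ring
  have hclose : Tendsto (fun k => dist y (c (φ k)) - dist (p (φ k)) (c (φ k)))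
      atTop (𝓝 0) := by
    apply squeeze_zero_norm (fun k => abs_dist_sub_le y (p (φ k)) (c (φ k))) ?_
    have : Tendsto (fun k => dist y (p (φ k))) atTop (𝓝 (dist y y)) :=
      tendsto_const_nhds.dist hyconv
    simpa using this
  have h1 : Tendsto (fun k => dist y (c (φ k)) - dist x0 (c (φ k))) atTop (𝓝 (f y)) :=
    (hconv y).comp hφ.tendsto_atTop
  have h2 : Tendsto (fun k => dist (p (φ k)) (c (φ k)) - dist x0 (c (φ k))) atTop (𝓝 (f y)) := by
    have := h1.sub hclose
    simp only [sub_zero] at this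
    convert this using 2 with k
    ring
  have h3 : Tendsto (fun k => dist (p (φ k)) (c (φ k)) - dist x0 (c (φ k)))
      atTop (𝓝 (f w - 1)) := by
    apply Tendsto.congr' (by filter_upwards [hval] with k hk; exact hk.symm)
    exact ((hconv w).comp hφ.tendsto_atTop).sub_const 1
  have hkey : f y = f w - 1 := tendsto_nhds_unique h2 h3
  -- but f = horoemb x0 w forces dist y w - dist x0 w = - dist x0 w - 1
  have hyw : dist w y = 1 := by
    have hlim : Tendsto (fun k => dist w (p (φ k))) atTop (𝓝 (dist w y)) :=
      tendsto_const_nhds.dist hyconv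
    have hevd : ∀ᶠ k in atTop, dist w (p (φ k)) = 1 := by
      filter_upwards [hev] with k hk
      rw [hp]; simp only []
      rw [G.dist_geo_left w (c (φ k)) (hmem (φ k))]
      exact min_eq_left hk
    exact tendsto_nhds_unique (hlim.congr' (by filter_upwards [hevd] with k hk; exact hk)) tendsto_const_nhds
  rw [← hw] at hkey
  unfold horoemb at hkey
  rw [dist_comm y w] at hkey
  rw [hyw] at hkey
  rw [dist_self] at hkey
  linarith
end Proper

section Extract
variable {r : ℕ} {X : Fin r → Type*} [∀ i, MetricSpace (X i)] [∀ i, ProperSpace (X i)]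

/-- Diagonal extraction: a common subsequence along which two families of
orbit sequences converge pointwise (horofunction-wise) in every factor. -/
lemma exists_subseq_horolimits (z0 : ∀ i, X i) (c d : ∀ i, ℕ → X i) :
    ∃ ψ : ℕ → ℕ, StrictMono ψ ∧ ∃ f g : ∀ i, X i → ℝ,
      (∀ i x, Tendsto (fun k => dist x (c i (ψ k)) - dist (z0 i) (c i (ψ k)))
        atTop (𝓝 (f i x))) ∧
      (∀ i x, Tendsto (fun k => dist x (d i (ψ k)) - dist (z0 i) (d i (ψ k)))
        atTop (𝓝 (g i x))) := by
  classical
  haveI : ∀ i, Nonempty (X i) := fun i => ⟨z0 i⟩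
  set D : ∀ i, ℕ → X i := fun i => TopologicalSpace.denseSeq (X i) with hD
  set S : ℕ → (Fin r × Bool × ℕ) → ℝ := fun n j =>
    dist (D j.1 j.2.2) (cond j.2.1 (c j.1 n) (d j.1 n))
      - dist (z0 j.1) (cond j.2.1 (c j.1 n) (d j.1 n)) with hS
  have hmem : ∀ n, S n ∈ Set.univ.pi
      (fun j : Fin r × Bool × ℕ => Set.Icc (-(dist (D j.1 j.2.2) (z0 j.1)))
        (dist (D j.1 j.2.2) (z0 j.1))) := by
    intro n
    rw [Set.mem_univ_pi]
    intro j
    have := abs_dist_sub_le (D j.1 j.2.2) (z0 j.1) (cond j.2.1 (c j.1 n) (d j.1 n))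
    rw [abs_le] at this
    exact ⟨this.1, this.2⟩
  obtain ⟨a, -, ψ, hψ, hconv⟩ :=
    (isCompact_univ_pi (fun j => isCompact_Icc)).tendsto_subseq hmem
  have hcoord : ∀ j, Tendsto (fun k => S (ψ k) j) atTop (𝓝 (a j)) :=
    fun j => (tendsto_pi_nhds.1 hconv) j
  refine ⟨ψ, hψ, ?_⟩
  have key : ∀ (i : Fin r) (bb : Bool) (x : X i), ∃ L : ℝ,
      Tendsto (fun k => dist x (cond bb (c i (ψ k)) (d i (ψ k)))
        - dist (z0 i) (cond bb (c i (ψ k)) (d i (ψ k)))) atTop (𝓝 L) := by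
    intro i bb x
    set Q : ℕ → X i := fun n => cond bb (c i n) (d i n) with hQ
    have hSQ : ∀ n m, S n (i, bb, m) = dist (D i m) (Q n) - dist (z0 i) (Q n) := fun n m => rfl
    have hcauchy : CauchySeq (fun k => dist x (Q (ψ k)) - dist (z0 i) (Q (ψ k))) := by
      rw [Metric.cauchySeq_iff]
      intro ε hε
      obtain ⟨m, hm⟩ : ∃ m, dist x (D i m) < ε / 4 := by
        have hdr : DenseRange (D i) := TopologicalSpace.denseRange_denseSeq (X i)
        exact Metric.denseRange_iff.1 hdr x (ε/4) (by positivity)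
      have hc2 : CauchySeq (fun k => S (ψ k) (i, bb, m)) := (hcoord (i, bb, m)).cauchySeq
      rw [Metric.cauchySeq_iff] at hc2
      obtain ⟨N, hN⟩ := hc2 (ε/2) (by positivity)
      refine ⟨N, fun k1 hk1 k2 hk2 => ?_⟩
      have hest : ∀ k, |(dist x (Q (ψ k)) - dist (z0 i) (Q (ψ k)))
          - S (ψ k) (i, bb, m)| ≤ dist x (D i m) := by
        intro k
        rw [hSQ]
        have h1 : (dist x (Q (ψ k)) - dist (z0 i) (Q (ψ k)))
            - (dist (D i m) (Q (ψ k)) - dist (z0 i) (Q (ψ k)))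
            = dist x (Q (ψ k)) - dist (D i m) (Q (ψ k)) := by ring
        rw [h1]
        exact abs_dist_sub_le x (D i m) (Q (ψ k))
      have hmid := hN k1 hk1 k2 hk2
      rw [Real.dist_eq] at hmid ⊢
      set u1 := dist x (Q (ψ k1)) - dist (z0 i) (Q (ψ k1)) with hu1
      set u2 := dist x (Q (ψ k2)) - dist (z0 i) (Q (ψ k2)) with hu2
      set s1 := S (ψ k1) (i, bb, m) with hs1
      set s2 := S (ψ k2) (i, bb, m) with hs2
      have key2 : |u1 - u2| ≤ |u1 - s1| + |s1 - s2| + |s2 - u2| := by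
        have h1 : u1 - u2 = (u1 - s1) + (s1 - s2) + (s2 - u2) := by ring
        rw [h1]
        exact (abs_add_le _ _).trans (add_le_add_left (abs_add_le _ _) _)
      have hcm : |s2 - u2| = |u2 - s2| := abs_sub_comm _ _
      rw [hcm] at key2
      linarith [hest k1, hest k2]
    exact cauchySeq_tendsto_of_complete hcauchy
  choose L hL using key
  exact ⟨fun i => L i true, fun i => L i false, fun i x => hL i true x, fun i x => hL i false x⟩

end Extract


section Escape
variable {r : ℕ} {X : Fin r → Type*} [∀ i, MetricSpace (X i)]

/-- For a transverse subgroup, a sequence escaping to infinity in one factor escapes to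
infinity in all factors. -/
lemma transverse_escape (z0 : ∀ i, X i) (Γ : Subgroup (∀ i, X i ≃ᵢ X i))
    (htr : IsTransverse z0 Γ) (c : ℕ → Γ) (i0 : Fin r)
    (h : Tendsto (fun n => dist (((c n : ∀ i, X i ≃ᵢ X i)) i0 (z0 i0)) (z0 i0)) atTop atTop)
    (i : Fin r) :
    Tendsto (fun n => dist (((c n : ∀ i, X i ≃ᵢ X i)) i (z0 i)) (z0 i)) atTop atTop := by
  by_contra hnot
  rw [Filter.tendsto_atTop] at hnot
  push_neg at hnot
  obtain ⟨b, hb⟩ := hnot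
  have hb' : ∃ᶠ n in atTop, dist (((c n : ∀ i, X i ≃ᵢ X i)) i (z0 i)) (z0 i) < b := by
    apply hb.mono
    intro n hn
    exact hn
  have hSin : {n | dist (((c n : ∀ i, X i ≃ᵢ X i)) i (z0 i)) (z0 i) < b}.Infinite :=
    Nat.frequently_atTop_iff_infinite.1 hb'
  set S := {n | dist (((c n : ∀ i, X i ≃ᵢ X i)) i (z0 i)) (z0 i) < b} with hS
  set T := c '' S with hT
  have hTin : T.Infinite := by
    intro hTfin
    apply hSin
    have hsub : S ⊆ ⋃ gg ∈ T, {n | c n = gg} := by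
      intro n hn
      exact Set.mem_biUnion (Set.mem_image_of_mem c hn) rfl
    apply Set.Finite.subset _ hsub
    apply hTfin.biUnion
    intro gg _
    -- each fiber is finite since the sequence escapes in factor i0
    have hev : ∀ᶠ n in atTop,
        dist (((gg : ∀ i, X i ≃ᵢ X i)) i0 (z0 i0)) (z0 i0) + 1
          ≤ dist (((c n : ∀ i, X i ≃ᵢ X i)) i0 (z0 i0)) (z0 i0) := h.eventually_ge_atTop _
    obtain ⟨Nn, hNn⟩ := eventually_atTop.1 hev
    apply Set.Finite.subset (Set.finite_Iio Nn)
    intro n hn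
    rw [Set.mem_setOf_eq] at hn
    by_contra hge
    rw [Set.mem_Iio, not_lt] at hge
    have := hNn n hge
    rw [hn] at this
    linarith
  set U : ℕ → Γ := fun k => ((Set.Infinite.natEmbedding T hTin k : T) : Γ) with hU
  have hUinj : Function.Injective U := by
    intro k1 k2 hk
    exact (Set.Infinite.natEmbedding T hTin).injective (Subtype.ext hk)
  have hdiv := htr.2.1 U hUinj z0 i
  obtain ⟨k, hk⟩ := (hdiv.eventually_ge_atTop b).exists
  have hmem : (U k : Γ) ∈ T := (Set.Infinite.natEmbedding T hTin k).2
  obtain ⟨n, hn, hcn⟩ := hmem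
  rw [hS, Set.mem_setOf_eq] at hn
  rw [hcn] at hn
  linarith
end Escape

/-- **Componentwise shadows for transverse subgroups** (Proposition 3.8).
Let `Z = X₁ × ⋯ × X_r` be a product of proper geodesic CAT(−1) spaces and
`Γ ≤ Isom(Z)` a transverse subgroup.  Let `z = (x₁, …, x_r) ∈ Z`.  For every `R > 0`
there exists `R' = R'(R, z) > 0` such that whenever `g, h ∈ Γ` satisfy
`h₁x₁ ∈ O_R(x₁, g₁x₁)` (in the first factor), one has `hᵢxᵢ ∈ O_{R'}(xᵢ, gᵢxᵢ)` for all
`i`, where `O_R(x,y) = {w : d([x,w], y) < R}` denotes the shadow. -/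
theorem componentwise_shadows
    {r : ℕ} {X : Fin r → Type*} [∀ i, MetricSpace (X i)] [∀ i, ProperSpace (X i)]
    (G : ∀ i, GeodesicStructure (X i)) (hX : ∀ i, (G i).IsCATNegOne)
    (z0 : ∀ i, X i) (Γ : Subgroup (∀ i, X i ≃ᵢ X i))
    (htr : IsTransverse z0 Γ) (hr : 0 < r)
    (z : ∀ i, X i) (R : ℝ) (hR : 0 < R) :
    ∃ R' > 0, ∀ g h : ∀ i, X i ≃ᵢ X i, g ∈ Γ → h ∈ Γ →
      Metric.infDist ((g ⟨0, hr⟩) (z ⟨0, hr⟩))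
        ((G ⟨0, hr⟩).seg (z ⟨0, hr⟩) ((h ⟨0, hr⟩) (z ⟨0, hr⟩))) < R →
      ∀ i, Metric.infDist ((g i) (z i)) ((G i).seg (z i) ((h i) (z i))) < R' := by
  classical
  by_contra hcon
  push_neg at hcon
  set i1 : Fin r := ⟨0, hr⟩ with hi1
  have hdata : ∀ n : ℕ, ∃ gg hh : ∀ i, X i ≃ᵢ X i, gg ∈ Γ ∧ hh ∈ Γ ∧
      Metric.infDist ((gg i1) (z i1)) ((G i1).seg (z i1) ((hh i1) (z i1))) < R ∧
      ∃ i, R + n ≤ Metric.infDist ((gg i) (z i)) ((G i).seg (z i) ((hh i) (z i))) := by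
    intro n
    obtain ⟨gg, hh, hmm⟩ := hcon (R + n) (by positivity)
    obtain ⟨h1, h2, h3, i, h4⟩ := hmm
    exact ⟨gg, hh, h1, h2, h3, i, h4⟩
  choose g h hgmem hhmem hshadow idx hbig using hdata
  obtain ⟨i0, hi0⟩ := Finite.exists_infinite_fiber idx
  have hSin : {n | idx n = i0}.Infinite := by
    rw [← Set.infinite_coe_iff] at *
    exact hi0
  set N : ℕ → ℕ := Nat.nth (fun n => idx n = i0) with hN
  have hNmem : ∀ k, idx (N k) = i0 := fun k => Nat.nth_mem_of_infinite hSin k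
  have hNmono : StrictMono N := Nat.nth_strictMono hSin
  have hNge : ∀ k : ℕ, (k:ℝ) ≤ (N k : ℝ) := by
    intro k
    exact_mod_cast hNmono.le_apply
  rcases eq_or_ne i0 i1 with h01 | h01
  · have hb := hbig (N 0)
    rw [hNmem 0, h01] at hb
    have hs := hshadow (N 0)
    have : (0:ℝ) ≤ (N 0 : ℝ) := Nat.cast_nonneg _
    linarith
  -- Main case: i0 ≠ i1.
  set γ : ℕ → (∀ i, X i ≃ᵢ X i) := fun k => (g (N k))⁻¹ with hγdef
  set φs : ℕ → (∀ i, X i ≃ᵢ X i) := fun k => (g (N k))⁻¹ * h (N k) with hφdef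
  have hγmem : ∀ k, γ k ∈ Γ := fun k => inv_mem (hgmem (N k))
  have hφmem : ∀ k, φs k ∈ Γ := fun k => mul_mem (inv_mem (hgmem (N k))) (hhmem (N k))
  -- distance identities
  have key1 : ∀ k i, dist (z i) ((γ k i) (z i)) = dist ((g (N k) i) (z i)) (z i) := by
    intro k i
    have h1 := (g (N k) i).dist_eq (z i) (((g (N k) i).symm) (z i))
    rw [(g (N k) i).apply_symm_apply] at h1
    exact h1.symm
  have key2 : ∀ k i, dist (z i) ((φs k i) (z i))
      = dist ((g (N k) i) (z i)) ((h (N k) i) (z i)) := by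
    intro k i
    have h1 := (g (N k) i).dist_eq (z i) (((g (N k) i).symm) ((h (N k) i) (z i)))
    rw [(g (N k) i).apply_symm_apply] at h1
    exact h1.symm
  have key3 : ∀ k i, dist ((γ k i) (z i)) ((φs k i) (z i))
      = dist (z i) ((h (N k) i) (z i)) := by
    intro k i
    exact (g (N k) i).symm.dist_eq (z i) ((h (N k) i) (z i))
  -- Gromov products at basepoint z
  have hGPz_big : ∀ k, R + (N k : ℝ) - 1 ≤
      (dist (z i0) ((γ k i0) (z i0)) + dist (z i0) ((φs k i0) (z i0))
        - dist ((γ k i0) (z i0)) ((φs k i0) (z i0))) / 2 := by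
    intro k
    have hb := hbig (N k)
    rw [hNmem k] at hb
    have hle := infDist_seg_le (G i0) (hX i0)
      ((g (N k) i0) (z i0)) (z i0) ((h (N k) i0) (z i0))
    rw [key1, key2, key3]
    linarith
  have hGPz_sh : ∀ k,
      (dist (z i1) ((γ k i1) (z i1)) + dist (z i1) ((φs k i1) (z i1))
        - dist ((γ k i1) (z i1)) ((φs k i1) (z i1))) / 2 ≤ R := by
    intro k
    have hs := hshadow (N k)
    have hle := gp_le_infDist (G i1) ((g (N k) i1) (z i1)) (z i1) ((h (N k) i1) (z i1))
    rw [key1, key2, key3]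
    linarith
  -- perturbation of the Gromov product when moving the basepoint from z to z0
  have hpert : ∀ k (i : Fin r),
      |(dist (z0 i) ((γ k i) (z0 i)) + dist (z0 i) ((φs k i) (z0 i))
          - dist ((γ k i) (z0 i)) ((φs k i) (z0 i))) / 2
        - (dist (z i) ((γ k i) (z i)) + dist (z i) ((φs k i) (z i))
          - dist ((γ k i) (z i)) ((φs k i) (z i))) / 2| ≤ 3 * dist (z0 i) (z i) := by
    intro k i
    have i1a : dist ((γ k i) (z0 i)) ((γ k i) (z i)) = dist (z0 i) (z i) :=
      (γ k i).dist_eq _ _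
    have i2a : dist ((φs k i) (z0 i)) ((φs k i) (z i)) = dist (z0 i) (z i) :=
      (φs k i).dist_eq _ _
    have t1 := dist_triangle (z0 i) (z i) ((γ k i) (z i))
    have t2 := dist_triangle (z0 i) ((γ k i) (z i)) ((γ k i) (z0 i))
    have t3 := dist_triangle (z i) (z0 i) ((γ k i) (z0 i))
    have t4 := dist_triangle (z i) ((γ k i) (z0 i)) ((γ k i) (z i))
    have t5 := dist_triangle (z0 i) (z i) ((φs k i) (z i))
    have t6 := dist_triangle (z0 i) ((φs k i) (z i)) ((φs k i) (z0 i))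
    have t7 := dist_triangle (z i) (z0 i) ((φs k i) (z0 i))
    have t8 := dist_triangle (z i) ((φs k i) (z0 i)) ((φs k i) (z i))
    have t9 := dist_triangle ((γ k i) (z0 i)) ((γ k i) (z i)) ((φs k i) (z0 i))
    have t10 := dist_triangle ((γ k i) (z i)) ((φs k i) (z i)) ((φs k i) (z0 i))
    have t11 := dist_triangle ((γ k i) (z i)) ((γ k i) (z0 i)) ((φs k i) (z i))
    have t12 := dist_triangle ((γ k i) (z0 i)) ((φs k i) (z0 i)) ((φs k i) (z i))
    have c1 : dist ((γ k i) (z i)) ((γ k i) (z0 i)) = dist (z0 i) (z i) := by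
      rw [dist_comm]; exact i1a
    have c2 : dist ((φs k i) (z i)) ((φs k i) (z0 i)) = dist (z0 i) (z i) := by
      rw [dist_comm]; exact i2a
    have c3 : dist (z i) (z0 i) = dist (z0 i) (z i) := dist_comm _ _
    have c4 : dist ((φs k i) (z0 i)) ((φs k i) (z i)) = dist (z0 i) (z i) := i2a
    rw [abs_le]
    constructor <;> nlinarith [dist_nonneg (x := z0 i) (y := z i)]
  -- Gromov products at z0
  have hGP0_big : ∀ k, R + (N k : ℝ) - 1 - 3 * dist (z0 i0) (z i0) ≤
      (dist (z0 i0) ((γ k i0) (z0 i0)) + dist (z0 i0) ((φs k i0) (z0 i0))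
        - dist ((γ k i0) (z0 i0)) ((φs k i0) (z0 i0))) / 2 := by
    intro k
    have h1 := hGPz_big k
    have h2 := (abs_le.1 (hpert k i0)).1
    linarith
  have hGP0_sh : ∀ k,
      (dist (z0 i1) ((γ k i1) (z0 i1)) + dist (z0 i1) ((φs k i1) (z0 i1))
        - dist ((γ k i1) (z0 i1)) ((φs k i1) (z0 i1))) / 2
        ≤ R + 3 * dist (z0 i1) (z i1) := by
    intro k
    have h1 := hGPz_sh k
    have h2 := (abs_le.1 (hpert k i1)).2
    linarith
  -- escape to infinity in factor i0, hence in all factors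
  have hescA0 : Tendsto (fun k => dist (z0 i0) ((γ k i0) (z0 i0))) atTop atTop := by
    apply tendsto_atTop_mono' atTop ?_ ?_
    · exact fun k => R + (k : ℝ) - 1 - 3 * dist (z0 i0) (z i0)
    · filter_upwards with k
      have h1 := hGP0_big k
      have h2 := dist_triangle (z0 i0) ((γ k i0) (z0 i0)) ((φs k i0) (z0 i0))
      have h4 := hNge k
      linarith
    · have : Tendsto (fun k : ℕ => (k:ℝ)) atTop atTop := tendsto_natCast_atTop_atTop
      have h5 := tendsto_atTop_add_const_right atTop (R - 1 - 3 * dist (z0 i0) (z i0)) this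
      apply h5.congr
      intro k
      ring
  have hescB0 : Tendsto (fun k => dist (z0 i0) ((φs k i0) (z0 i0))) atTop atTop := by
    apply tendsto_atTop_mono' atTop ?_ ?_
    · exact fun k => R + (k : ℝ) - 1 - 3 * dist (z0 i0) (z i0)
    · filter_upwards with k
      have h1 := hGP0_big k
      have h2 := dist_triangle (z0 i0) ((φs k i0) (z0 i0)) ((γ k i0) (z0 i0))
      have h3 : dist ((φs k i0) (z0 i0)) ((γ k i0) (z0 i0))
          = dist ((γ k i0) (z0 i0)) ((φs k i0) (z0 i0)) := dist_comm _ _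
      have h4 := hNge k
      linarith
    · have : Tendsto (fun k : ℕ => (k:ℝ)) atTop atTop := tendsto_natCast_atTop_atTop
      have h5 := tendsto_atTop_add_const_right atTop (R - 1 - 3 * dist (z0 i0) (z i0)) this
      apply h5.congr
      intro k
      ring
  have hescA : ∀ i, Tendsto (fun k => dist (z0 i) ((γ k i) (z0 i))) atTop atTop := by
    intro i
    have htr' := transverse_escape z0 Γ htr (fun k => ⟨γ k, hγmem k⟩) i0
      (by simpa [dist_comm] using hescA0) i
    simpa [dist_comm] using htr'
  have hescB : ∀ i, Tendsto (fun k => dist (z0 i) ((φs k i) (z0 i))) atTop atTop := by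
    intro i
    have htr' := transverse_escape z0 Γ htr (fun k => ⟨φs k, hφmem k⟩) i0
      (by simpa [dist_comm] using hescB0) i
    simpa [dist_comm] using htr'
  -- extract a common subsequence with horofunction limits in every factor
  obtain ⟨ψ, hψ, f, f', hfa, hgb⟩ := exists_subseq_horolimits z0
    (fun i k => (γ k i) (z0 i)) (fun i k => (φs k i) (z0 i))
  -- boundary membership of the limits
  have hbdryA : ∀ i, f i ∈ horoBdry (z0 i) := by
    intro i
    have hconv : Tendsto (fun k => horoemb (z0 i) ((γ (ψ k) i) (z0 i))) atTop (𝓝 (f i)) :=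
      tendsto_pi_nhds.2 (fun x => hfa i x)
    constructor
    · exact mem_closure_of_tendsto hconv (Eventually.of_forall (fun k => ⟨_, rfl⟩))
    · exact limit_notin_range (z0 i) (G i) (fun k => (γ (ψ k) i) (z0 i)) (f i)
        (fun x => hfa i x) ((hescA i).comp hψ.tendsto_atTop)
  have hbdryB : ∀ i, f' i ∈ horoBdry (z0 i) := by
    intro i
    have hconv : Tendsto (fun k => horoemb (z0 i) ((φs (ψ k) i) (z0 i))) atTop (𝓝 (f' i)) :=
      tendsto_pi_nhds.2 (fun x => hgb i x)
    constructor
    · exact mem_closure_of_tendsto hconv (Eventually.of_forall (fun k => ⟨_, rfl⟩))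
    · exact limit_notin_range (z0 i) (G i) (fun k => (φs (ψ k) i) (z0 i)) (f' i)
        (fun x => hgb i x) ((hescB i).comp hψ.tendsto_atTop)
  set ξ : BdryZ z0 := fun i => ⟨f i, hbdryA i⟩ with hξdef
  set η : BdryZ z0 := fun i => ⟨f' i, hbdryB i⟩ with hηdef
  have hξmem : ξ ∈ limitSet z0 Γ := by
    refine ⟨fun k => ⟨γ (ψ k), hγmem (ψ k)⟩, fun i => ?_⟩
    exact tendsto_pi_nhds.2 (fun x => hfa i x)
  have hηmem : η ∈ limitSet z0 Γ := by
    refine ⟨fun k => ⟨φs (ψ k), hφmem (ψ k)⟩, fun i => ?_⟩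
    exact tendsto_pi_nhds.2 (fun x => hgb i x)
  -- merging in factor i0
  have hmerge : f i0 = f' i0 := by
    apply merge_limits (G i0) (z0 i0) (hX i0)
      (fun k => (γ (ψ k) i0) (z0 i0)) (fun k => (φs (ψ k) i0) (z0 i0))
      (f i0) (f' i0) (hfa i0) (hgb i0)
    apply tendsto_atTop_mono' atTop ?_ ?_
    · exact fun k => R + (k : ℝ) - 1 - 3 * dist (z0 i0) (z i0)
    · filter_upwards with k
      have h1 := hGP0_big (ψ k)
      have h4 := hNge (ψ k)
      have h5 : (k : ℝ) ≤ (ψ k : ℝ) := Nat.cast_le.2 hψ.le_apply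
      linarith
    · have : Tendsto (fun k : ℕ => (k:ℝ)) atTop atTop := tendsto_natCast_atTop_atTop
      have h5 := tendsto_atTop_add_const_right atTop (R - 1 - 3 * dist (z0 i0) (z i0)) this
      apply h5.congr
      intro k
      ring
  -- ξ and η agree in factor i0, so by antipodality ξ = η
  have hxieq : ξ = η := by
    by_contra hne
    exact htr.2.2 ξ η hξmem hηmem hne i0 (Subtype.ext hmerge)
  have hf1g1 : f i1 = f' i1 := by
    have := congrFun hxieq i1
    exact congrArg Subtype.val this
  -- pairing bound in factor i1
  set Cb := R + 3 * dist (z0 i1) (z i1) with hCb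
  have hCb0 : 0 ≤ Cb := by
    rw [hCb]
    have := dist_nonneg (x := z0 i1) (y := z i1)
    linarith
  have hpair : ∀ x, -(2*Cb) ≤ f i1 x + f' i1 x := by
    intro x
    have hsum : Tendsto (fun k => (dist x ((γ (ψ k) i1) (z0 i1)) - dist (z0 i1) ((γ (ψ k) i1) (z0 i1)))
        + (dist x ((φs (ψ k) i1) (z0 i1)) - dist (z0 i1) ((φs (ψ k) i1) (z0 i1))))
        atTop (𝓝 (f i1 x + f' i1 x)) := (hfa i1 x).add (hgb i1 x)
    apply ge_of_tendsto hsum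
    filter_upwards with k
    have h1 := hGP0_sh (ψ k)
    have h2 := dist_triangle ((γ (ψ k) i1) (z0 i1)) x ((φs (ψ k) i1) (z0 i1))
    have h3 : dist ((γ (ψ k) i1) (z0 i1)) x = dist x ((γ (ψ k) i1) (z0 i1)) := dist_comm _ _
    linarith
  -- but f i1 takes the value -(Cb + 1) somewhere: contradiction
  obtain ⟨y, hy⟩ := limit_attains (z0 i1) (G i1) (fun k => (γ (ψ k) i1) (z0 i1)) (f i1)
    (fun x => hfa i1 x) ((hescA i1).comp hψ.tendsto_atTop) (Cb + 1) (by linarith)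
  have hpy := hpair y
  rw [hy, ← hf1g1, hy] at hpy
  linarith

end
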